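/- Let R be a finite commutative chain ring with maximal ideal ⟨γ⟩, nilpotency index s, and residue field of size q. Let C ⊆ R^n be a linear code of rank K ≥ 1 with minimum homogeneous distance d = d_Hom(C). Then d ≤ (q^K/(q^K − 1))·n. -/

import Mathlib

open scoped BigOperators Classical

/-- The normalized homogeneous weight on a finite chain ring with maximal ideal `⟨γ⟩`,
nilpotency index `s` and residue field of size `q`. -/
noncomputable def wtHom {R : Type*} [CommRing R] (γ : R) (s q : ℕ) (x : R) : ℚ :=
  if x = 0 then 0
  else if x ∈ Ideal.span {γ ^ (s - 1)} then (q : ℚ) / ((q : ℚ) - 1)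
  else 1

/-- Homogeneous weight of a vector: the sum of the weights of its coordinates. -/
noncomputable def wtHomV {R : Type*} [CommRing R] (γ : R) (s q : ℕ) {n : ℕ}
    (v : Fin n → R) : ℚ :=
  ∑ i, wtHom γ s q (v i)

/-- Hamming weight of a vector: the number of nonzero coordinates. -/
noncomputable def hWt {R : Type*} [Zero R] {n : ℕ} (v : Fin n → R) : ℕ :=
  Nat.card {i : Fin n // v i ≠ 0}

/-- `K` is the rank of the code `C`: the least cardinality of a generating set of `C`
as an `R`-module. -/
def IsCodeRank {R : Type*} [CommRing R] {n : ℕ} (C : Submodule R (Fin n → R)) (K : ℕ) : Prop :=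
  IsLeast {k : ℕ | ∃ S : Finset (Fin n → R),
    S.card = k ∧ Submodule.span R (S : Set (Fin n → R)) = C} K

/-- The socle of a code: the codewords all of whose coordinates lie in `⟨γ^(s-1)⟩`. -/
def socleCode {R : Type*} [CommRing R] (γ : R) (s : ℕ) {n : ℕ}
    (C : Submodule R (Fin n → R)) : Submodule R (Fin n → R) :=
  C ⊓ Submodule.pi Set.univ (fun _ : Fin n => Ideal.span {γ ^ (s - 1)})

section Aux

variable {A B : Type*} [Fintype A] [AddCommGroup A] [AddCommGroup B] [DecidableEq B]

private lemma fiber_card_eq (f : A →+ B) {y : B} (hy : y ∈ Finset.univ.image f) :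
    (Finset.univ.filter fun a => f a = y).card
      = (Finset.univ.filter fun a => f a = 0).card := by
  obtain ⟨a₀, -, ha₀⟩ := Finset.mem_image.mp hy
  refine Finset.card_bij' (fun a _ => a - a₀) (fun a _ => a + a₀) ?_ ?_ ?_ ?_
  · intro a ha
    simp only [Finset.mem_filter, Finset.mem_univ, true_and] at ha ⊢
    rw [map_sub, ha, ha₀, sub_self]
  · intro a ha
    simp only [Finset.mem_filter, Finset.mem_univ, true_and] at ha ⊢
    rw [map_add, ha, ha₀, zero_add]
  · intro a _; simp
  · intro a _; simp

private lemma sum_comp_eq (f : A →+ B) (g : B → ℚ) :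
    ∑ a, g (f a)
      = ((Finset.univ.filter fun a => f a = 0).card : ℚ)
        * ∑ y ∈ Finset.univ.image f, g y := by
  rw [← Finset.sum_fiberwise_of_maps_to
    (fun a _ => Finset.mem_image_of_mem f (Finset.mem_univ a)) (fun a => g (f a)),
    Finset.mul_sum]
  refine Finset.sum_congr rfl fun y hy => ?_
  have h1 : ∀ a ∈ Finset.univ.filter (fun a => f a = y), g (f a) = g y := fun a ha => by
    rw [(Finset.mem_filter.mp ha).2]
  rw [Finset.sum_congr rfl h1, Finset.sum_const, nsmul_eq_mul, fiber_card_eq f hy]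

private lemma card_comp_eq (f : A →+ B) :
    Fintype.card A
      = (Finset.univ.filter fun a => f a = 0).card * (Finset.univ.image f).card := by
  rw [← Finset.card_univ, Finset.card_eq_sum_card_image f,
    Finset.sum_congr rfl (fun y hy => fiber_card_eq f hy), Finset.sum_const, smul_eq_mul,
    mul_comm]

end Aux

private lemma wtHom_zero {R : Type*} [CommRing R] (γ : R) (s q : ℕ) : wtHom γ s q 0 = 0 :=
  if_pos rfl

private lemma sum_wtHom_le {R : Type*} [CommRing R] [Fintype R] (γ : R) (s q : ℕ) (hq2 : 2 ≤ q)
    (hJ : (Finset.univ.filter fun y : R => y ∈ Ideal.span {γ ^ (s - 1)}).card ≤ q)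
    (T : Finset R) (h0 : (0 : R) ∈ T) :
    ∑ y ∈ T, wtHom γ s q y ≤ (T.card : ℚ) := by
  classical
  set J := Ideal.span {γ ^ (s - 1)} with hJdef
  have hq1 : (1 : ℚ) ≤ (q : ℚ) - 1 := by
    have : (2 : ℚ) ≤ (q : ℚ) := by exact_mod_cast hq2
    linarith
  set p : R → Prop := fun y => y ∈ J ∧ y ≠ 0 with hp
  have hsplit := Finset.sum_filter_add_sum_filter_not T p (wtHom γ s q)
  set T₁ := T.filter p with hT₁
  set T₂ := T.filter (fun y => ¬ p y) with hT₂
  have hT₁card : (T₁.card : ℚ) ≤ (q : ℚ) - 1 := by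
    have hsub : T₁ ⊆ (Finset.univ.filter fun y : R => y ∈ J).erase 0 := by
      intro y hy
      rw [hT₁, Finset.mem_filter] at hy
      exact Finset.mem_erase.mpr ⟨hy.2.2, Finset.mem_filter.mpr ⟨Finset.mem_univ _, hy.2.1⟩⟩
    have h0J : (0 : R) ∈ Finset.univ.filter fun y : R => y ∈ J :=
      Finset.mem_filter.mpr ⟨Finset.mem_univ _, J.zero_mem⟩
    have := Finset.card_le_card hsub
    rw [Finset.card_erase_of_mem h0J] at this
    have hq' : T₁.card ≤ q - 1 := le_trans this (by omega)
    have hcast : (T₁.card : ℚ) ≤ ((q - 1 : ℕ) : ℚ) := by exact_mod_cast hq'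
    calc (T₁.card : ℚ) ≤ ((q - 1 : ℕ) : ℚ) := hcast
      _ ≤ (q : ℚ) - 1 := by
          rw [Nat.cast_sub (by omega)]; norm_num
  have hsum₁ : ∑ y ∈ T₁, wtHom γ s q y = (T₁.card : ℚ) * ((q : ℚ) / ((q : ℚ) - 1)) := by
    rw [Finset.sum_congr rfl (fun y hy => ?_), Finset.sum_const, nsmul_eq_mul]
    rw [hT₁, Finset.mem_filter] at hy
    rw [wtHom, if_neg hy.2.2, if_pos hy.2.1]
  have hsum₂ : ∑ y ∈ T₂, wtHom γ s q y ≤ (T₂.card : ℚ) - 1 := by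
    have h0T₂ : (0 : R) ∈ T₂ := by
      rw [hT₂, Finset.mem_filter]
      exact ⟨h0, fun h => h.2 rfl⟩
    rw [← Finset.sum_erase T₂ (wtHom_zero γ s q)]
    have hle := Finset.sum_le_card_nsmul (T₂.erase 0) (wtHom γ s q) 1 (fun y hy => by
      rw [Finset.mem_erase] at hy
      have hyT : ¬ p y := (Finset.mem_filter.mp hy.2).2
      have hyJ : y ∉ J := fun hJy => hyT ⟨hJy, hy.1⟩
      rw [wtHom, if_neg hy.1, if_neg hyJ])
    rw [nsmul_eq_mul, mul_one, Finset.card_erase_of_mem h0T₂] at hle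
    calc ∑ y ∈ T₂.erase 0, wtHom γ s q y ≤ ((T₂.card - 1 : ℕ) : ℚ) := hle
      _ ≤ (T₂.card : ℚ) - 1 := by
          rw [Nat.cast_sub (Nat.one_le_iff_ne_zero.mpr (Finset.card_ne_zero_of_mem h0T₂))]
          norm_num
  have hcards : T₁.card + T₂.card = T.card := Finset.card_filter_add_card_filter_not p
  have h1 : (T₁.card : ℚ) * ((q : ℚ) / ((q : ℚ) - 1)) ≤ (T₁.card : ℚ) + 1 := by
    rw [div_eq_mul_inv, ← mul_assoc, mul_inv_le_iff₀ (by linarith)]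
    nlinarith [Nat.cast_nonneg (α := ℚ) T₁.card]
  have hTcast : (T.card : ℚ) = (T₁.card : ℚ) + (T₂.card : ℚ) := by exact_mod_cast hcards.symm
  rw [← hsplit]
  calc ∑ y ∈ T₁, wtHom γ s q y + ∑ y ∈ T₂, wtHom γ s q y
      ≤ ((T₁.card : ℚ) + 1) + ((T₂.card : ℚ) - 1) := by
        rw [hsum₁]; exact add_le_add h1 hsum₂
    _ = (T.card : ℚ) := by rw [hTcast]; ring

set_option maxHeartbeats 1600000 in
/-- Weakened Plotkin bound in terms of the rank: `d ≤ q^K/(q^K - 1)·n`. -/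
theorem homogeneous_plotkin_bound_rank {R : Type*} [CommRing R] [IsLocalRing R] [Fintype R]
    (γ : R) (s q : ℕ) (hs : 1 ≤ s)
    (hmax : IsLocalRing.maximalIdeal R = Ideal.span {γ})
    (hnil : γ ^ s = 0) (hnil' : γ ^ (s - 1) ≠ 0)
    (hq : Nat.card (R ⧸ IsLocalRing.maximalIdeal R) = q)
    {n : ℕ} (C : Submodule R (Fin n → R)) (K : ℕ) (hK1 : 1 ≤ K)
    (hK : IsCodeRank C K) (d : ℚ)
    (hd : IsLeast {w : ℚ | ∃ c ∈ C, c ≠ 0 ∧ wtHomV γ s q c = w} d) :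
    d ≤ ((q : ℚ) ^ K) / ((q : ℚ) ^ K - 1) * n := by
  classical
  have hnontriv : Nontrivial R := by
    by_contra h
    rw [not_nontrivial_iff_subsingleton] at h
    exact hnil' (Subsingleton.elim _ _)
  set m := IsLocalRing.maximalIdeal R with hm
  haveI : Fintype (R ⧸ m) := Fintype.ofFinite _
  have hq2 : 2 ≤ q := by
    have hnt : Nontrivial (R ⧸ m) :=
      Ideal.Quotient.nontrivial_iff.mpr (Ideal.IsMaximal.ne_top inferInstance)
    have h1 : 1 < Nat.card (R ⧸ m) := by
      rw [Nat.card_eq_fintype_card]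
      exact Fintype.one_lt_card_iff_nontrivial.mpr hnt
    omega
  -- cardinality of R via the residue map
  set km := (Finset.univ.filter fun x : R => x ∈ m).card with hkm
  set π : R →+ R ⧸ m := AddMonoidHom.mk' (Ideal.Quotient.mk m) (map_add _) with hπ
  have hπ0 : (Finset.univ.filter fun x : R => π x = 0)
      = (Finset.univ.filter fun x : R => x ∈ m) := by
    refine Finset.filter_congr fun x _ => ?_
    simp [hπ, Ideal.Quotient.eq_zero_iff_mem]
  have hπimg : Finset.univ.image π = Finset.univ :=
    Finset.image_univ_of_surjective (fun y => Ideal.Quotient.mk_surjective y)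
  have hRcard : Fintype.card R = km * q := by
    have h := card_comp_eq π
    rw [hπ0, hπimg, Finset.card_univ] at h
    rw [h]
    congr 1
    rw [← hq, Nat.card_eq_fintype_card]
  have hkm0 : 0 < km :=
    Finset.card_pos.mpr ⟨0, Finset.mem_filter.mpr ⟨Finset.mem_univ _, m.zero_mem⟩⟩
  -- the last nonzero power of γ generates an ideal of at most q elements
  have hJq : (Finset.univ.filter fun y : R => y ∈ Ideal.span {γ ^ (s - 1)}).card ≤ q := by
    set μ : R →+ R := AddMonoidHom.mk' (fun x => x * γ ^ (s - 1))
      (fun a b => add_mul a b _) with hμ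
    have himg : Finset.univ.image μ
        = Finset.univ.filter fun y : R => y ∈ Ideal.span {γ ^ (s - 1)} := by
      ext y
      constructor
      · intro hy
        obtain ⟨x, -, rfl⟩ := Finset.mem_image.mp hy
        exact Finset.mem_filter.mpr ⟨Finset.mem_univ _,
          Ideal.mem_span_singleton'.mpr ⟨x, rfl⟩⟩
      · intro hy
        obtain ⟨x, hx⟩ := Ideal.mem_span_singleton'.mp (Finset.mem_filter.mp hy).2
        exact Finset.mem_image.mpr ⟨x, Finset.mem_univ _, hx⟩
    have hker : (Finset.univ.filter fun x : R => x ∈ m)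
        ⊆ Finset.univ.filter fun x : R => μ x = 0 := by
      intro x hx
      rw [Finset.mem_filter] at hx ⊢
      refine ⟨Finset.mem_univ _, ?_⟩
      have hxγ : x ∈ Ideal.span {γ} := by rw [← hmax]; exact hx.2
      obtain ⟨c, rfl⟩ := Ideal.mem_span_singleton'.mp hxγ
      show c * γ * γ ^ (s - 1) = 0
      have hγs : γ * γ ^ (s - 1) = γ ^ s := by
        rw [← pow_succ']
        congr 1
        omega
      rw [mul_assoc, hγs, hnil, mul_zero]
    have h1 := card_comp_eq μ
    rw [himg] at h1
    have h2 : km ≤ (Finset.univ.filter fun x : R => μ x = 0).card :=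
      Finset.card_le_card hker
    have h3 : km * (Finset.univ.filter fun y : R =>
        y ∈ Ideal.span {γ ^ (s - 1)}).card ≤ km * q := by
      calc km * (Finset.univ.filter fun y : R => y ∈ Ideal.span {γ ^ (s - 1)}).card
          ≤ (Finset.univ.filter fun x : R => μ x = 0).card
            * (Finset.univ.filter fun y : R => y ∈ Ideal.span {γ ^ (s - 1)}).card :=
            Nat.mul_le_mul_right _ h2
        _ = Fintype.card R := h1.symm
        _ = km * q := hRcard
    exact Nat.le_of_mul_le_mul_left h3 hkm0
  -- set up the code as a finite type
  haveI : Fintype ↥C := Fintype.ofFinite _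
  set N := Fintype.card ↥C with hN
  have hNfilter : (Finset.univ.filter fun x : Fin n → R => x ∈ C).card = N :=
    (Fintype.card_of_subtype (Finset.univ.filter fun x : Fin n → R => x ∈ C) (fun x => by simp)).symm
  -- upper bound on the total weight
  have hsum_le : ∑ c : ↥C, wtHomV γ s q (c : Fin n → R) ≤ (n : ℚ) * N := by
    have hswap : ∑ c : ↥C, wtHomV γ s q (c : Fin n → R)
        = ∑ i : Fin n, ∑ c : ↥C, wtHom γ s q ((c : Fin n → R) i) := by
      simp only [wtHomV]
      rw [Finset.sum_comm]
    rw [hswap]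
    have hbound : ∀ i : Fin n, ∑ c : ↥C, wtHom γ s q ((c : Fin n → R) i) ≤ (N : ℚ) := by
      intro i
      set fi : ↥C →+ R := AddMonoidHom.mk' (fun c => (c : Fin n → R) i) (fun a b => rfl)
        with hfi
      have h1 : ∑ c : ↥C, wtHom γ s q ((c : Fin n → R) i)
          = ∑ c : ↥C, wtHom γ s q (fi c) := rfl
      rw [h1, sum_comp_eq fi (wtHom γ s q)]
      have h0T : (0 : R) ∈ Finset.univ.image fi :=
        Finset.mem_image.mpr ⟨0, Finset.mem_univ _, by simp [hfi]⟩
      have h2 := sum_wtHom_le γ s q hq2 hJq _ h0T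
      have h3 := card_comp_eq fi
      calc ((Finset.univ.filter fun c : ↥C => fi c = 0).card : ℚ)
            * ∑ y ∈ Finset.univ.image fi, wtHom γ s q y
          ≤ ((Finset.univ.filter fun c : ↥C => fi c = 0).card : ℚ)
            * ((Finset.univ.image fi).card : ℚ) :=
            mul_le_mul_of_nonneg_left h2 (Nat.cast_nonneg _)
        _ = (N : ℚ) := by
            rw [← Nat.cast_mul, ← h3]
    calc ∑ i : Fin n, ∑ c : ↥C, wtHom γ s q ((c : Fin n → R) i)
        ≤ ∑ _i : Fin n, (N : ℚ) := Finset.sum_le_sum (fun i _ => hbound i)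
      _ = (n : ℚ) * N := by
          rw [Finset.sum_const, Finset.card_univ, Fintype.card_fin, nsmul_eq_mul]
  -- lower bound on the total weight
  have hN1 : 1 ≤ N := Fintype.card_pos_iff.mpr ⟨0⟩
  have hfiltercard :
      (Finset.univ.filter fun c : ↥C => (c : Fin n → R) ≠ 0).card = N - 1 := by
    have heq : (Finset.univ.filter fun c : ↥C => (c : Fin n → R) ≠ 0)
        = Finset.univ.filter fun c : ↥C => c ≠ 0 := by
      refine Finset.filter_congr fun c _ => ?_
      constructor
      · intro h h0; exact h (by rw [h0]; rfl)
      · intro h h0; exact h (Subtype.ext h0)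
    rw [heq, Finset.filter_ne', Finset.card_erase_of_mem (Finset.mem_univ _),
      Finset.card_univ]
  have hlow : ((N : ℚ) - 1) * d ≤ ∑ c : ↥C, wtHomV γ s q (c : Fin n → R) := by
    have hzero : ∀ c ∈ Finset.univ.filter (fun c : ↥C => ¬ (c : Fin n → R) ≠ 0),
        wtHomV γ s q (c : Fin n → R) = 0 := by
      intro c hc
      have hc0 : (c : Fin n → R) = 0 := not_not.mp (Finset.mem_filter.mp hc).2
      rw [hc0]
      simp [wtHomV, wtHom_zero]
    have hsplit := Finset.sum_filter_add_sum_filter_not Finset.univ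
      (fun c : ↥C => (c : Fin n → R) ≠ 0) (fun c => wtHomV γ s q (c : Fin n → R))
    rw [Finset.sum_eq_zero hzero, add_zero] at hsplit
    rw [← hsplit]
    have hd2 : ∀ c ∈ Finset.univ.filter (fun c : ↥C => (c : Fin n → R) ≠ 0),
        d ≤ wtHomV γ s q (c : Fin n → R) := by
      intro c hc
      exact hd.2 ⟨(c : Fin n → R), c.2, (Finset.mem_filter.mp hc).2, rfl⟩
    have hnsmul := Finset.card_nsmul_le_sum _ _ d hd2
    rw [hfiltercard] at hnsmul
    calc ((N : ℚ) - 1) * d = ((N - 1 : ℕ) : ℚ) * d := by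
          rw [Nat.cast_sub hN1]; norm_num
      _ = (N - 1) • d := (nsmul_eq_mul _ _).symm
      _ ≤ _ := hnsmul
  -- the code has at least q^K elements
  have hqKN : q ^ K ≤ N := by
    obtain ⟨S, hScard, hSspan⟩ := hK.1
    set ψ : (↥S → R) →+ (Fin n → R) := AddMonoidHom.mk'
      (fun a => ∑ v ∈ S.attach, a v • (v : Fin n → R))
      (fun a b => by
        rw [← Finset.sum_add_distrib]
        exact Finset.sum_congr rfl fun v _ => add_smul _ _ _) with hψ
    have himg : Finset.univ.image ψ
        = Finset.univ.filter (fun x : Fin n → R => x ∈ C) := by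
      ext x
      simp only [Finset.mem_image, Finset.mem_filter, Finset.mem_univ, true_and]
      constructor
      · rintro ⟨a, -, rfl⟩
        show (∑ v ∈ S.attach, a v • (v : Fin n → R)) ∈ C
        exact Submodule.sum_mem C fun v _ =>
          Submodule.smul_mem C _ (hSspan ▸ Submodule.subset_span v.2)
      · intro hx
        rw [← hSspan] at hx
        obtain ⟨f, -, hf⟩ := Submodule.mem_span_finset.mp hx
        refine ⟨fun v => f (v : Fin n → R), ?_⟩
        show ∑ v ∈ S.attach, f (v : Fin n → R) • (v : Fin n → R) = x
        rw [Finset.sum_attach S (fun v => f v • v)]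
        exact hf
    have hker : (Finset.univ.filter fun a : ↥S → R => ψ a = 0)
        ⊆ Finset.univ.filter fun a : ↥S → R => ∀ v, a v ∈ m := by
      intro a ha
      rw [Finset.mem_filter] at ha ⊢
      refine ⟨Finset.mem_univ _, fun v₀ => ?_⟩
      by_contra hv
      have hu : IsUnit (a v₀) := IsLocalRing.notMem_maximalIdeal.mp hv
      have ha0 : ∑ v ∈ S.attach, a v • (v : Fin n → R) = 0 := ha.2
      have h1 : a v₀ • (v₀ : Fin n → R)
          = -∑ v ∈ S.attach.erase v₀, a v • (v : Fin n → R) := by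
        have h2 := Finset.add_sum_erase S.attach (fun v => a v • (v : Fin n → R))
          (Finset.mem_attach S v₀)
        rw [ha0] at h2
        exact eq_neg_of_add_eq_zero_left h2
      obtain ⟨u, hu'⟩ := hu
      have h2 : (v₀ : Fin n → R) ∈ Submodule.span R
          ((S.erase (v₀ : Fin n → R) : Finset (Fin n → R)) : Set (Fin n → R)) := by
        have h3 : (v₀ : Fin n → R) = (↑u⁻¹ : R) • (a v₀ • (v₀ : Fin n → R)) := by
          rw [smul_smul, ← hu', Units.inv_mul, one_smul]
        have hmem : (a v₀ • (v₀ : Fin n → R)) ∈ Submodule.span R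
            ((S.erase (v₀ : Fin n → R) : Finset (Fin n → R)) : Set (Fin n → R)) := by
          rw [h1]
          refine neg_mem (Submodule.sum_mem _ fun v hvmem =>
            Submodule.smul_mem _ _ (Submodule.subset_span ?_))
          rw [Finset.mem_erase] at hvmem
          exact Finset.mem_coe.mpr
            (Finset.mem_erase.mpr ⟨fun hc => hvmem.1 (Subtype.ext hc), v.2⟩)
        have h4 := Submodule.smul_mem _ ((↑u⁻¹ : R)) hmem
        rwa [← h3] at h4
      have hspan' : Submodule.span R
          ((S.erase (v₀ : Fin n → R) : Finset (Fin n → R)) : Set (Fin n → R)) = C := by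
        rw [← hSspan]
        conv_rhs => rw [← Finset.insert_erase v₀.2]
        rw [Finset.coe_insert, Submodule.span_insert_eq_span h2]
      have hle := hK.2 ⟨S.erase (v₀ : Fin n → R), rfl, hspan'⟩
      rw [Finset.card_erase_of_mem v₀.2, hScard] at hle
      omega
    -- counting
    have hcard := card_comp_eq ψ
    rw [himg, hNfilter] at hcard
    have hdom : Fintype.card (↥S → R) = (km * q) ^ K := by
      rw [← Nat.card_eq_fintype_card, Nat.card_fun, Nat.card_eq_fintype_card (α := R),
        hRcard, Nat.card_eq_finsetCard, hScard]
    have hmcard : Nat.card {x : R // x ∈ m} = km := by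
      rw [Nat.card_eq_fintype_card, Fintype.card_of_subtype (Finset.univ.filter fun x : R => x ∈ m) (fun x => by simp)]
    have hkψ : (Finset.univ.filter fun a : ↥S → R => ψ a = 0).card ≤ km ^ K := by
      refine le_trans (Finset.card_le_card hker) ?_
      have heq : (Finset.univ.filter fun a : ↥S → R => ∀ v, a v ∈ m).card
          = Fintype.card {a : ↥S → R // ∀ v, a v ∈ m} :=
        (Fintype.card_of_subtype (Finset.univ.filter fun a : ↥S → R => ∀ v, a v ∈ m)
          (fun x => by simp)).symm
      rw [heq, Fintype.card_congr
        (Equiv.subtypePiEquivPi (p := fun (_ : ↥S) (x : R) => x ∈ m)),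
        ← Nat.card_eq_fintype_card, Nat.card_fun, hmcard, Nat.card_eq_finsetCard, hScard]
    have hpos : 0 < (Finset.univ.filter fun a : ↥S → R => ψ a = 0).card :=
      Finset.card_pos.mpr ⟨0, Finset.mem_filter.mpr ⟨Finset.mem_univ _, map_zero ψ⟩⟩
    have h5 : km ^ K * q ^ K ≤ km ^ K * N := by
      calc km ^ K * q ^ K = (km * q) ^ K := (mul_pow km q K).symm
        _ = (Finset.univ.filter fun a : ↥S → R => ψ a = 0).card * N := by
            rw [← hdom, hcard]
        _ ≤ km ^ K * N := Nat.mul_le_mul_right _ hkψ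
    exact Nat.le_of_mul_le_mul_left h5 (pow_pos hkm0 K)
  -- final arithmetic
  have hQ2 : (2 : ℚ) ≤ (q : ℚ) ^ K := by
    calc (2 : ℚ) ≤ (q : ℚ) := by exact_mod_cast hq2
      _ ≤ (q : ℚ) ^ K := le_self_pow₀ (by exact_mod_cast Nat.one_le_of_lt hq2) (by omega)
  have hQN : ((q : ℚ)) ^ K ≤ (N : ℚ) := by exact_mod_cast hqKN
  have hN2 : (2 : ℚ) ≤ (N : ℚ) := le_trans hQ2 hQN
  have hkey : ((N : ℚ) - 1) * d ≤ (n : ℚ) * N := le_trans hlow hsum_le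
  have hd1 : d ≤ (n : ℚ) * N / ((N : ℚ) - 1) := by
    rw [le_div_iff₀ (by linarith)]
    linarith [hkey]
  have hstep : (n : ℚ) * N / ((N : ℚ) - 1)
      ≤ ((q : ℚ) ^ K) / ((q : ℚ) ^ K - 1) * n := by
    rw [div_mul_eq_mul_div, div_le_div_iff₀ (by linarith) (by linarith)]
    nlinarith [mul_nonneg (Nat.cast_nonneg (α := ℚ) n) (sub_nonneg.mpr hQN)]
  exact le_trans hd1 hstep
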